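/- Let I be an ideal on ℕ such that for every C ∉ I there exist two disjoint subsets of C both not in I. If AOS(I) = {(a_n) ∈ ℓ₁ : (n·a_n) does not I-converge to 0} is nonempty, then AOS(I) ∪ {0} contains an infinite-dimensional closed linear subspace of ℓ₁ (i.e., AOS(I) is spaceable). -/

import Mathlib

open Filter Set

section Aux

local notation "ℓ1" => lp (fun _ : ℕ => ℝ) 1

/-- Coordinate evaluation as a linear map on ℓ₁. -/
noncomputable def evalL1 (n : ℕ) : ℓ1 →ₗ[ℝ] ℝ where
  toFun h := h n
  map_add' a b := by simp [lp.coeFn_add]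
  map_smul' c a := by simp [lp.coeFn_smul]

lemma evalL1_cont (n : ℕ) : Continuous (evalL1 n) :=
  ((evalL1 n).mkContinuous 1 (fun h => by
    show ‖h n‖ ≤ 1 * ‖h‖
    simpa using lp.norm_apply_le_norm one_ne_zero h n)).continuous

/-- From the splitting hypothesis, extract a pairwise disjoint sequence of subsets of `C`
not belonging to `I`. -/
lemma exists_disjoint_family (I : Set (Set ℕ))
    (hsplit : ∀ C : Set ℕ, C ∉ I →
      ∃ A B : Set ℕ, A ⊆ C ∧ B ⊆ C ∧ Disjoint A B ∧ A ∉ I ∧ B ∉ I)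
    (C : Set ℕ) (hC : C ∉ I) :
    ∃ D : ℕ → Set ℕ, (∀ k, D k ⊆ C) ∧ (∀ k, D k ∉ I) ∧
      Pairwise (Function.onFun Disjoint D) := by
  classical
  choose A B hAsub hBsub hdis hAI hBI using hsplit
  let rem : ℕ → {s : Set ℕ // s ∉ I} :=
    fun k => Nat.rec ⟨C, hC⟩ (fun _ p => ⟨B p.1 p.2, hBI p.1 p.2⟩) k
  have hrem_succ : ∀ k, (rem (k + 1)).1 ⊆ (rem k).1 := fun k => hBsub _ _
  have hrem_sub : ∀ j k, j ≤ k → (rem k).1 ⊆ (rem j).1 := by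
    intro j k hjk
    induction k with
    | zero => simp_all
    | succ k ih =>
      rcases Nat.lt_or_ge j (k + 1) with h | h
      · exact (hrem_succ k).trans (ih (Nat.lt_succ_iff.mp h))
      · have : j = k + 1 := le_antisymm hjk h
        subst this; exact subset_rfl
  have hrem_C : ∀ k, (rem k).1 ⊆ C := fun k => hrem_sub 0 k (Nat.zero_le k)
  refine ⟨fun k => A (rem k).1 (rem k).2, fun k => (hAsub _ _).trans (hrem_C k),
    fun k => hAI _ _, ?_⟩
  intro j k hjk
  rcases Nat.lt_or_ge j k with h | h
  · -- A (rem j) disjoint from rem (j+1) ⊇ rem k ⊇ A (rem k)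
    exact ((hdis (rem j).1 (rem j).2).mono_right
      (((hAsub _ _).trans (hrem_sub (j + 1) k h)) : A (rem k).1 (rem k).2 ⊆ (rem (j+1)).1))
  · have h' : k < j := lt_of_le_of_ne h (Ne.symm hjk)
    exact (((hdis (rem k).1 (rem k).2).mono_right
      (((hAsub _ _).trans (hrem_sub (k + 1) j h')) : A (rem j).1 (rem j).2 ⊆ (rem (k+1)).1))).symm

end Aux

/-- If every set `C ∉ I` splits into two disjoint subsets not in `I`, and
`AOS(I) = {(a n) ∈ ℓ₁ : (n * a n) does not I-converge to 0}` is nonempty, then `AOS(I)` is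
spaceable: `AOS(I) ∪ {0}` contains a closed infinite-dimensional subspace of `ℓ₁`. -/
theorem AOS_spaceable (I : Set (Set ℕ))
    (hfin : ∀ A : Set ℕ, A.Finite → A ∈ I)
    (hsub : ∀ A B : Set ℕ, A ⊆ B → B ∈ I → A ∈ I)
    (hunion : ∀ A B : Set ℕ, A ∈ I → B ∈ I → A ∪ B ∈ I)
    (huniv : (Set.univ : Set ℕ) ∉ I)
    (hsplit : ∀ C : Set ℕ, C ∉ I →
      ∃ A B : Set ℕ, A ⊆ C ∧ B ⊆ C ∧ Disjoint A B ∧ A ∉ I ∧ B ∉ I)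
    (hne : ∃ f : lp (fun _ : ℕ => ℝ) 1,
      ¬ ∀ ε > (0 : ℝ), {n : ℕ | ε ≤ |(n : ℝ) * f n|} ∈ I) :
    ∃ S : Submodule ℝ (lp (fun _ : ℕ => ℝ) 1),
      IsClosed (S : Set (lp (fun _ : ℕ => ℝ) 1)) ∧
      ¬ Module.Finite ℝ S ∧
      ∀ f ∈ S, f ≠ 0 → ¬ ∀ ε > (0 : ℝ), {n : ℕ | ε ≤ |(n : ℝ) * f n|} ∈ I := by
  classical
  obtain ⟨f, hf⟩ := hne
  push_neg at hf
  obtain ⟨ε, hε, hC⟩ := hf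
  set C : Set ℕ := {n : ℕ | ε ≤ |(n : ℝ) * f n|} with hCdef
  obtain ⟨D, hDsub, hDI, hDdis⟩ := exists_disjoint_family I hsplit C hC
  -- basic facts on C
  have hfC : ∀ n ∈ C, f n ≠ 0 := by
    intro n hn h0
    have : ε ≤ |(n : ℝ) * f n| := hn
    rw [h0, mul_zero, abs_zero] at this
    linarith
  -- the generating vectors: f restricted to D k
  have hmem : ∀ k : ℕ, Memℓp ((D k).indicator (⇑f)) 1 := by
    intro k
    apply memℓp_gen
    have hs : Summable fun n => ‖f n‖ ^ (1 : ENNReal).toReal :=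
      (lp.memℓp f).summable (by norm_num)
    refine Summable.of_nonneg_of_le (fun n => ?_) (fun n => ?_) hs
    · positivity
    · simp only [ENNReal.toReal_one, Real.rpow_one, pow_one]
      by_cases h : n ∈ D k <;> simp [Set.indicator_apply, h, Real.norm_eq_abs, abs_nonneg]
  set g : ℕ → lp (fun _ : ℕ => ℝ) 1 := fun k => ⟨(D k).indicator (⇑f), hmem k⟩ with hg
  have hg_apply : ∀ k n, (g k : ∀ _ : ℕ, ℝ) n = (D k).indicator (⇑f) n := fun _ _ => rfl
  set U : Set ℕ := ⋃ k, D k with hU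
  -- the key closed submodule W
  set W : Submodule ℝ (lp (fun _ : ℕ => ℝ) 1) :=
    { carrier := {h | (∀ n, n ∉ U → (h : ∀ _ : ℕ, ℝ) n = 0) ∧
        ∀ k, ∀ n ∈ D k, ∀ m ∈ D k,
          (h : ∀ _ : ℕ, ℝ) n * f m = (h : ∀ _ : ℕ, ℝ) m * f n}
      add_mem' := by
        rintro a b ⟨ha0, ha⟩ ⟨hb0, hb⟩
        constructor
        · intro n hn; simp [lp.coeFn_add, ha0 n hn, hb0 n hn]
        · intro k n hn m hm
          simp only [lp.coeFn_add, Pi.add_apply]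
          rw [add_mul, add_mul, ha k n hn m hm, hb k n hn m hm]
      zero_mem' := by constructor <;> simp
      smul_mem' := by
        rintro c a ⟨ha0, ha⟩
        constructor
        · intro n hn; simp [lp.coeFn_smul, ha0 n hn]
        · intro k n hn m hm
          simp only [lp.coeFn_smul, Pi.smul_apply, smul_eq_mul]
          rw [mul_assoc, ha k n hn m hm, mul_assoc] } with hW
  have hWclosed : IsClosed (W : Set (lp (fun _ : ℕ => ℝ) 1)) := by
    have h1 : ∀ n : ℕ, IsClosed {h : lp (fun _ : ℕ => ℝ) 1 | (h : ∀ _ : ℕ, ℝ) n = 0} :=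
      fun n => isClosed_eq (evalL1_cont n) continuous_const
    have h2 : ∀ n m : ℕ, IsClosed {h : lp (fun _ : ℕ => ℝ) 1 |
        (h : ∀ _ : ℕ, ℝ) n * f m = (h : ∀ _ : ℕ, ℝ) m * f n} := fun n m =>
      isClosed_eq ((evalL1_cont n).mul continuous_const)
        ((evalL1_cont m).mul continuous_const)
    have : (W : Set (lp (fun _ : ℕ => ℝ) 1)) =
        (⋂ (n : ℕ) (_ : n ∉ U), {h : lp (fun _ : ℕ => ℝ) 1 | (h : ∀ _ : ℕ, ℝ) n = 0}) ∩
        (⋂ (k : ℕ) (n : ℕ) (_ : n ∈ D k) (m : ℕ) (_ : m ∈ D k),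
          {h : lp (fun _ : ℕ => ℝ) 1 |
            (h : ∀ _ : ℕ, ℝ) n * f m = (h : ∀ _ : ℕ, ℝ) m * f n}) := by
      ext h
      constructor
      · rintro ⟨h0, hp⟩
        exact ⟨Set.mem_iInter.mpr fun n => Set.mem_iInter.mpr fun hn => h0 n hn,
          Set.mem_iInter.mpr fun k => Set.mem_iInter.mpr fun n => Set.mem_iInter.mpr fun hn =>
            Set.mem_iInter.mpr fun m => Set.mem_iInter.mpr fun hm => hp k n hn m hm⟩
      · rintro ⟨hA, hB⟩
        exact ⟨fun n hn => Set.mem_iInter.mp (Set.mem_iInter.mp hA n) hn,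
          fun k n hn m hm => Set.mem_iInter.mp (Set.mem_iInter.mp (Set.mem_iInter.mp
            (Set.mem_iInter.mp (Set.mem_iInter.mp hB k) n) hn) m) hm⟩
    rw [this]
    exact IsClosed.inter (isClosed_iInter fun n => isClosed_iInter fun _ => h1 n)
      (isClosed_iInter fun k => isClosed_iInter fun n => isClosed_iInter fun _ =>
        isClosed_iInter fun m => isClosed_iInter fun _ => h2 n m)
  -- generators lie in W
  have hgW : ∀ k, g k ∈ W := by
    intro k
    constructor
    · intro n hn
      have : n ∉ D k := fun h => hn (Set.mem_iUnion.mpr ⟨k, h⟩)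
      simp [hg_apply, Set.indicator_apply, this]
    · intro j n hn m hm
      by_cases h : j = k
      · subst h
        simp [hg_apply, Set.indicator_apply, hn, hm, mul_comm]
      · have hn' : n ∉ D k := fun hnk =>
          (hDdis h).le_bot (Set.mem_inter hn hnk)
        have hm' : m ∉ D k := fun hmk =>
          (hDdis h).le_bot (Set.mem_inter hm hmk)
        simp [hg_apply, Set.indicator_apply, hn', hm']
  set S : Submodule ℝ (lp (fun _ : ℕ => ℝ) 1) :=
    (Submodule.span ℝ (Set.range g)).topologicalClosure with hS
  have hSW : S ≤ W :=
    Submodule.topologicalClosure_minimal _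
      (Submodule.span_le.mpr (Set.range_subset_iff.mpr hgW)) hWclosed
  -- each D k is nonempty with a point where f ≠ 0
  have hDne : ∀ k, ∃ n ∈ D k, f n ≠ 0 := by
    intro k
    by_contra h
    push_neg at h
    rcases Set.eq_empty_or_nonempty (D k) with he | ⟨n, hn⟩
    · exact hDI k (he ▸ hfin ∅ finite_empty)
    · exact hfC n (hDsub k hn) (h n hn)
  refine ⟨S, Submodule.isClosed_topologicalClosure _, ?_, ?_⟩
  · -- infinite dimensional
    intro hfinS
    have hli : LinearIndependent ℝ g := by
      rw [linearIndependent_iff']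
      intro s c hsum k hk
      obtain ⟨n, hn, hfn⟩ := hDne k
      have := congrArg (evalL1 n) hsum
      rw [map_sum, map_zero] at this
      simp only [map_smul, smul_eq_mul] at this
      have heval : ∀ j ∈ s, c j * evalL1 n (g j) = if j = k then c k * f n else 0 := by
        intro j hj
        by_cases h : j = k
        · subst h; rw [show evalL1 n (g j) = (g j : ∀ _ : ℕ, ℝ) n from rfl]; simp [hg_apply, Set.indicator_apply, hn]
        · have hn' : n ∉ D j := fun hnj => (hDdis h).le_bot (Set.mem_inter hnj hn)
          rw [show evalL1 n (g j) = (g j : ∀ _ : ℕ, ℝ) n from rfl]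
          simp [hg_apply, Set.indicator_apply, hn', h]
      rw [Finset.sum_congr rfl heval, Finset.sum_ite_eq' s k (fun _ => c k * f n),
        if_pos hk] at this
      exact (mul_eq_zero.mp this).resolve_right hfn
    -- map g into S
    have hgS : ∀ k, g k ∈ S := fun k =>
      Submodule.le_topologicalClosure _ (Submodule.subset_span (Set.mem_range_self k))
    have hli' : LinearIndependent ℝ (fun k => (⟨g k, hgS k⟩ : S)) := by
      apply LinearIndependent.of_comp S.subtype
      exact hli
    haveI := hfinS
    haveI : Finite ℕ := hli'.finite
    exact not_finite ℕ
  · -- the AOS property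
    intro h hhS hh0 hIconv
    obtain ⟨hZ, hP⟩ := hSW hhS
    -- h ≠ 0 gives a nonzero coordinate
    have : ∃ n, (h : ∀ _ : ℕ, ℝ) n ≠ 0 := by
      by_contra hc
      push_neg at hc
      exact hh0 (lp.ext (funext hc))
    obtain ⟨n, hn⟩ := this
    have hnU : n ∈ U := by
      by_contra hnu
      exact hn (hZ n hnu)
    obtain ⟨k, hnk⟩ := Set.mem_iUnion.mp hnU
    have hfn : f n ≠ 0 := hfC n (hDsub k hnk)
    set c : ℝ := (h : ∀ _ : ℕ, ℝ) n / f n with hc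
    have hcne : c ≠ 0 := div_ne_zero hn hfn
    -- on D k, h m = c * f m
    have hhm : ∀ m ∈ D k, (h : ∀ _ : ℕ, ℝ) m = c * f m := by
      intro m hm
      have := hP k n hnk m hm
      rw [hc, div_mul_eq_mul_div, eq_div_iff hfn]
      linarith [this]
    -- D k ⊆ {m | |c| * ε ≤ |m * h m|}
    have hDk_sub : D k ⊆ {m : ℕ | |c| * ε ≤ |(m : ℝ) * (h : ∀ _ : ℕ, ℝ) m|} := by
      intro m hm
      have hmC : m ∈ C := hDsub k hm
      have : |(m : ℝ) * (h : ∀ _ : ℕ, ℝ) m| = |c| * |(m : ℝ) * f m| := by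
        rw [hhm m hm]
        rw [show (m : ℝ) * (c * f m) = c * ((m : ℝ) * f m) by ring, abs_mul]
      rw [Set.mem_setOf_eq, this]
      exact mul_le_mul_of_nonneg_left hmC (abs_nonneg c)
    have hpos : (0 : ℝ) < |c| * ε := mul_pos (abs_pos.mpr hcne) hε
    exact hDI k (hsub _ _ hDk_sub (hIconv (|c| * ε) hpos))
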